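/- Let p : E → C be a prefibration over a factorisation category (C, L, R) such that the restriction of p over R is also a preopfibration and such that the composition of cartesian lifts covering any composite x → z → y with x → z in R and z → y in L is cartesian. Then p is a semifibration over (C, L, R). -/
import Mathlib


open CategoryTheory CategoryTheory.Functor CategoryTheory.Limits

universe v₁ v₂ u₁ u₂

section Factorization

variable (C : Type u₁) [Category.{v₁} C]

/-- A factorisation category: a category equipped with two subcategories `L` (left class)
and `R` (right class) containing all isomorphisms, such that every morphism factors,
uniquely up to unique isomorphism, as a map of `L` followed by a map of `R`. -/
structure FactorizationCategory where
  L : MorphismProperty C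
  R : MorphismProperty C
  L_iso : ∀ {x y : C} (f : x ⟶ y), IsIso f → L f
  R_iso : ∀ {x y : C} (f : x ⟶ y), IsIso f → R f
  L_comp : ∀ {x y z : C} (f : x ⟶ y) (g : y ⟶ z), L f → L g → L (f ≫ g)
  R_comp : ∀ {x y z : C} (f : x ⟶ y) (g : y ⟶ z), R f → R g → R (f ≫ g)
  factor : ∀ {x y : C} (f : x ⟶ y), ∃ (z : C) (l : x ⟶ z) (r : z ⟶ y),
    L l ∧ R r ∧ l ≫ r = f
  factor_unique : ∀ {x y : C} (f : x ⟶ y) {z z' : C}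
    (l : x ⟶ z) (r : z ⟶ y) (l' : x ⟶ z') (r' : z' ⟶ y),
    L l → R r → L l' → R r' → l ≫ r = f → l' ≫ r' = f →
    ∃! e : z ≅ z', l ≫ e.hom = l' ∧ e.hom ≫ r' = r

variable {C}
variable {E : Type u₂} [Category.{v₂} E]

/-- A semifibration over a factorisation category `(C, L, R)`: cartesian lifts of `L`-maps,
opcartesian lifts of `R`-maps, and every morphism lying over a composite of an `R`-map
followed by an `L`-map factors as an opcartesian morphism, a fibrewise morphism
and a cartesian morphism. -/
structure IsSemifibration (p : E ⥤ C) (FC : FactorizationCategory C) : Prop where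
  cartLift : ∀ {c c' : C} (l : c ⟶ c'), FC.L l → ∀ Y : E, p.obj Y = c' →
    ∃ (X : E) (φ : X ⟶ Y), p.IsCartesian l φ
  cocartLift : ∀ {c c' : C} (r : c ⟶ c'), FC.R r → ∀ X : E, p.obj X = c →
    ∃ (Y : E) (φ : X ⟶ Y), p.IsCocartesian r φ
  fact : ∀ {X Y : E} (α : X ⟶ Y) {c : C} (r : p.obj X ⟶ c) (l : c ⟶ p.obj Y),
    FC.R r → FC.L l → p.map α = r ≫ l →
    ∃ (X' Y' : E) (ρ : X ⟶ X') (φ : X' ⟶ Y') (lam : Y' ⟶ Y),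
      p.IsCocartesian r ρ ∧ p.IsHomLift (𝟙 c) φ ∧ p.IsCartesian l lam ∧
        ρ ≫ φ ≫ lam = α

end Factorization

/-- A prefibration over a factorisation category which is a preopfibration over the right
class, and for which compositions of cartesian lifts covering an R-map followed by an
L-map are cartesian, is a semifibration. -/
theorem isSemifibration_of_prefibration {C : Type u₁} [Category.{v₁} C]
    {E : Type u₂} [Category.{v₂} E] (p : E ⥤ C) (FC : FactorizationCategory C)
    (hpre : ∀ {c c' : C} (f : c ⟶ c') (Y : E), p.obj Y = c' →
      ∃ (X : E) (φ : X ⟶ Y), p.IsCartesian f φ)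
    (hopre : ∀ {c c' : C} (r : c ⟶ c'), FC.R r → ∀ X : E, p.obj X = c →
      ∃ (Y : E) (φ : X ⟶ Y), p.IsCocartesian r φ)
    (hcomp : ∀ {x z y : C} (r : x ⟶ z) (l : z ⟶ y), FC.R r → FC.L l →
      ∀ {X Z Y : E} (φ : X ⟶ Z) (ψ : Z ⟶ Y),
        p.IsCartesian r φ → p.IsCartesian l ψ → p.IsCartesian (r ≫ l) (φ ≫ ψ)) :
    IsSemifibration p FC := by
  refine ⟨fun l _ Y hY => hpre l Y hY, hopre, ?_⟩
  intro X Y α c r l hr hl hα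
  -- cartesian lift of l
  obtain ⟨Y', lam, hlam⟩ := hpre l Y rfl
  -- cartesian lift of r over Y'
  obtain ⟨X'', φ', hφ'⟩ := hpre r Y' (IsHomLift.domain_eq p l lam)
  -- their composite is cartesian over r ≫ l
  have hcart : p.IsCartesian (r ≫ l) (φ' ≫ lam) := hcomp r l hr hl φ' lam hφ' hlam
  -- opcartesian lift of r
  obtain ⟨X', ρ, hρ⟩ := hopre r hr X rfl
  have hαlift : p.IsHomLift (r ≫ l) α := IsHomLift.of_fac' p (r ≫ l) α rfl rfl (by simp [hα])
  -- factor α through the cartesian φ' ≫ lam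
  obtain ⟨χ, ⟨hχ, hχfac⟩, -⟩ := hcart.universal_property (a' := X) α
  have h1 : p.IsHomLift r (χ ≫ φ') := by
    have := IsHomLift.domain_eq p (𝟙 (p.obj X)) χ
    exact IsHomLift.comp_lift_id_left' p (p.obj X) χ r φ'
  -- factor through opcartesian ρ
  obtain ⟨ψ, ⟨hψ, hψfac⟩, -⟩ := hρ.universal_property (b' := Y') (χ ≫ φ')
  refine ⟨X', Y', ρ, ψ, lam, hρ, hψ, hlam, ?_⟩
  rw [← Category.assoc, hψfac, Category.assoc, hχfac]
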